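/- Let (τ_n), n ∈ ℤ, be a sequence of nonzero elements of a field, let δ1, δ2, δ3 be nonzero elements of the field, and define T: ℤ³ → F by T(j,k,ℓ) := δ1^{kℓ}·δ2^{jℓ}·δ3^{jk}·τ_{j+2k+3ℓ} (integer exponents). Set α = 1/(δ2δ3), β = −1/(δ1δ3), γ = 1/(δ1δ2). Then, for each (j,k,ℓ) ∈ ℤ³ and n := j+2k+3ℓ, the discrete BKP relation T(j+1,k+1,ℓ+1)T(j,k,ℓ) − T(j+1,k,ℓ)T(j,k+1,ℓ+1) + T(j,k+1,ℓ)T(j+1,k,ℓ+1) − T(j,k,ℓ+1)T(j+1,k+1,ℓ) = 0 holds if and only if the Somos-6 relation τ_{n+6}τ_n = α·τ_{n+5}τ_{n+1} + β·τ_{n+4}τ_{n+2} + γ·τ_{n+3}² holds. -/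

import Mathlib

noncomputable section

/-- For the reduced tau function `T(j,k,ℓ) = δ1^{kℓ}δ2^{jℓ}δ3^{jk}τ_{j+2k+3ℓ}`, the
discrete BKP relation at `(j,k,ℓ)` is equivalent to the Somos-6 relation at
`n = j+2k+3ℓ` with coefficients `α = 1/(δ2δ3)`, `β = −1/(δ1δ3)`, `γ = 1/(δ1δ2)`. -/
theorem somos6_from_discrete_BKP {K : Type*} [Field K] (τ : ℤ → K) (δ1 δ2 δ3 : K)
    (hτ : ∀ n : ℤ, τ n ≠ 0) (h1 : δ1 ≠ 0) (h2 : δ2 ≠ 0) (h3 : δ3 ≠ 0) (j k l : ℤ) :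
    let T : ℤ → ℤ → ℤ → K := fun j k l =>
      δ1 ^ (k*l) * δ2 ^ (j*l) * δ3 ^ (j*k) * τ (j + 2*k + 3*l)
    let α : K := 1/(δ2*δ3)
    let β : K := -(1/(δ1*δ3))
    let γ : K := 1/(δ1*δ2)
    let n : ℤ := j + 2*k + 3*l
    (T (j+1) (k+1) (l+1) * T j k l - T (j+1) k l * T j (k+1) (l+1)
        + T j (k+1) l * T (j+1) k (l+1) - T j k (l+1) * T (j+1) (k+1) l = 0
      ↔ τ (n+6) * τ n
        = α * (τ (n+5) * τ (n+1)) + β * (τ (n+4) * τ (n+2)) + γ * (τ (n+3))^2) := by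
  intro T α β γ n
  have exp1 : ∀ (x : K), x ≠ 0 → ∀ a b : ℤ,
      x ^ ((a+1)*(b+1)) = x ^ (a*b) * x ^ a * x ^ b * x := by
    intro x hx a b
    have h : (a+1)*(b+1) = a*b + a + b + 1 := by ring
    rw [h, zpow_add₀ hx, zpow_add₀ hx, zpow_add₀ hx, zpow_one]
  have exp2 : ∀ (x : K), x ≠ 0 → ∀ a b : ℤ,
      x ^ ((a+1)*b) = x ^ (a*b) * x ^ b := by
    intro x hx a b
    have h : (a+1)*b = a*b + b := by ring
    rw [h, zpow_add₀ hx]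
  have exp3 : ∀ (x : K), x ≠ 0 → ∀ a b : ℤ,
      x ^ (a*(b+1)) = x ^ (a*b) * x ^ a := by
    intro x hx a b
    have h : a*(b+1) = a*b + a := by ring
    rw [h, zpow_add₀ hx]
  have t6 : j+1 + 2*(k+1) + 3*(l+1) = n + 6 := by simp only [n]; ring
  have t5 : j + 2*(k+1) + 3*(l+1) = n + 5 := by simp only [n]; ring
  have t2 : j + 2*(k+1) + 3*l = n + 2 := by simp only [n]; ring
  have t4 : j+1 + 2*k + 3*(l+1) = n + 4 := by simp only [n]; ring
  have t1 : j+1 + 2*k + 3*l = n + 1 := by simp only [n]; ring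
  have t3 : j + 2*k + 3*(l+1) = n + 3 := by simp only [n]; ring
  have t3' : j+1 + 2*(k+1) + 3*l = n + 3 := by simp only [n]; ring
  have t0 : j + 2*k + 3*l = n := by simp only [n]
  simp only [T, exp1 _ h1, exp1 _ h2, exp1 _ h3, exp2 _ h1, exp2 _ h2, exp2 _ h3,
    exp3 _ h1, exp3 _ h2, exp3 _ h3, t6, t5, t4, t3, t3', t2, t1, t0]
  set a := δ1 ^ (k*l) with ha
  set b := δ1 ^ k with hb
  set c := δ1 ^ l with hc
  set d := δ2 ^ (j*l) with hd
  set e := δ2 ^ j with he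
  set f := δ2 ^ l with hf
  set g := δ3 ^ (j*k) with hg
  set p := δ3 ^ j with hp
  set q := δ3 ^ k with hq
  have ha' : a ≠ 0 := zpow_ne_zero _ h1
  have hb' : b ≠ 0 := zpow_ne_zero _ h1
  have hc' : c ≠ 0 := zpow_ne_zero _ h1
  have hd' : d ≠ 0 := zpow_ne_zero _ h2
  have he' : e ≠ 0 := zpow_ne_zero _ h2
  have hf' : f ≠ 0 := zpow_ne_zero _ h2
  have hg' : g ≠ 0 := zpow_ne_zero _ h3
  have hp' : p ≠ 0 := zpow_ne_zero _ h3
  have hq' : q ≠ 0 := zpow_ne_zero _ h3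
  have hG : a*a*d*d*g*g*b*c*e*f*p*q ≠ 0 := by
    apply_rules [mul_ne_zero]
  constructor
  · intro H
    have h0 : (a*a*d*d*g*g*b*c*e*f*p*q) *
        (δ1*δ2*δ3*(τ (n+6)*τ n) - δ1*(τ (n+5)*τ (n+1)) + δ2*(τ (n+4)*τ (n+2))
          - δ3*(τ (n+3))^2) = 0 := by linear_combination H
    have hS := (mul_eq_zero.1 h0).resolve_left hG
    simp only [α, β, γ]
    field_simp
    linear_combination hS
  · intro H
    have hS : δ1*δ2*δ3*(τ (n+6)*τ n) - δ1*(τ (n+5)*τ (n+1)) + δ2*(τ (n+4)*τ (n+2))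
        - δ3*(τ (n+3))^2 = 0 := by
      simp only [α, β, γ] at H
      field_simp at H
      have h123 : δ1*δ2*δ3 ≠ 0 := by apply_rules [mul_ne_zero]
      have h0' : (δ1*δ2*δ3) * (δ1*δ2*δ3*(τ (n+6)*τ n) - δ1*(τ (n+5)*τ (n+1))
          + δ2*(τ (n+4)*τ (n+2)) - δ3*(τ (n+3))^2) = 0 := by linear_combination (δ1*δ2*δ3) * H
      exact (mul_eq_zero.1 h0').resolve_left h123
    linear_combination (a*a*d*d*g*g*b*c*e*f*p*q) * hS
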